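/- Let ι be a type, k a natural number, τ : Fin k → ℝ with τ j ≥ 0 for all j, and let μ_j (j ∈ Fin k) be probability mass functions on Finset ι, each locally decaying with rate τ j. Consider the product distribution of the μ_j on k-tuples (S_0, …, S_{k-1}) of finite subsets of ι (i.e., the S_j are mutually independent). Then for every finite subset B of ι, the probability that B ⊆ S_0 ∪ ⋯ ∪ S_{k-1} is at most (∑_{j} τ j)^{B.card}. In other words, the union of finitely many independent locally decaying random subsets is locally decaying with rate equal to the sum of the rates. -/

import Mathlib

open scoped ENNReal

/-- A probability mass function `μ` on finite subsets of `ι` is *locally decaying*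
with rate `τ` if for every finite `B ⊆ ι` the probability that `B` is contained in
the random subset is at most `τ ^ |B|`. -/
def LocallyDecaying {ι : Type*} [DecidableEq ι] (μ : PMF (Finset ι)) (τ : ℝ) : Prop :=
  ∀ B : Finset ι,
    (∑' S : Finset ι, if B ⊆ S then μ S else 0) ≤ ENNReal.ofReal (τ ^ B.card)

/-- Fubini for `tsum` over finite pi types, in `ℝ≥0∞`. -/
lemma tsum_pi_fin_aux {β : Type*} : ∀ (k : ℕ) (f : Fin k → β → ℝ≥0∞),
    ∑' g : Fin k → β, ∏ j, f j (g j) = ∏ j, ∑' b, f j b := by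
  intro k
  induction k with
  | zero =>
    intro f
    haveI : Unique (Fin 0 → β) := ⟨⟨fun i => i.elim0⟩, fun g => funext fun i => i.elim0⟩
    simp [tsum_eq_single (default : Fin 0 → β)
      (fun b hb => absurd (Unique.eq_default b) hb)]
  | succ n ih =>
    intro f
    have he : ∑' g : Fin (n+1) → β, ∏ j, f j (g j)
        = ∑' p : β × (Fin n → β), ∏ j, f j ((Fin.consEquiv (fun _ => β)) p j) :=
      ((Fin.consEquiv (fun _ : Fin (n+1) => β)).tsum_eq
        (fun g => ∏ j, f j (g j))).symm
    have hpt : ∀ (a : β) (g : Fin n → β),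
        ∏ j, f j ((Fin.cons a g : Fin (n+1) → β) j)
          = f 0 a * ∏ j : Fin n, f j.succ (g j) := by
      intro a g
      rw [Fin.prod_univ_succ, Fin.cons_zero]
      exact congrArg _ (Finset.prod_congr rfl fun j _ => by rw [Fin.cons_succ])
    have he2 : ∑' p : β × (Fin n → β), ∏ j, f j ((Fin.consEquiv (fun _ => β)) p j)
        = ∑' p : β × (Fin n → β), f 0 p.1 * ∏ j : Fin n, f j.succ (p.2 j) :=
      tsum_congr fun p => hpt p.1 p.2
    have he3 : ∑' p : β × (Fin n → β), f 0 p.1 * ∏ j : Fin n, f j.succ (p.2 j)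
        = ∑' (a : β) (g : Fin n → β), f 0 a * ∏ j : Fin n, f j.succ (g j) :=
      ENNReal.tsum_prod (α := β) (β := Fin n → β)
        (f := fun a g => f 0 a * ∏ j : Fin n, f j.succ (g j))
    rw [he, he2, he3]
    simp_rw [ENNReal.tsum_mul_left, ENNReal.tsum_mul_right]
    rw [ih (fun j b => f j.succ b), Fin.prod_univ_succ]

/-- The multinomial-style identity for the union bound. -/
lemma sum_prod_pow_aux {ι : Type*} [DecidableEq ι] (k : ℕ) (τ : Fin k → ℝ)
    (B : Finset ι) :
    ∑ σ : {x // x ∈ B} → Fin k, ∏ j,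
        τ j ^ (B.attach.filter (fun b => σ b = j)).card
      = (∑ j, τ j) ^ B.card := by
  have h1 : ∀ σ : {x // x ∈ B} → Fin k,
      ∏ j, τ j ^ (B.attach.filter (fun b => σ b = j)).card
        = ∏ b ∈ B.attach, τ (σ b) := by
    intro σ
    rw [← Finset.prod_fiberwise_of_maps_to (fun b _ => Finset.mem_univ (σ b))
      (fun b => τ (σ b))]
    refine Finset.prod_congr rfl fun j _ => ?_
    rw [← Finset.prod_const]
    refine Finset.prod_congr rfl fun b hb => ?_
    rw [(Finset.mem_filter.mp hb).2]
  simp_rw [h1]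
  have : (∑ j, τ j) ^ B.card = ∏ _b ∈ B.attach, ∑ j, τ j := by
    rw [Finset.prod_const, Finset.card_attach]
  rw [this, ← Finset.univ_eq_attach, Finset.prod_univ_sum]
  simp [Fintype.piFinset_univ]

/-- **Closure of locally decaying distributions under union (finitely many factors).**
If `S_0, …, S_{k-1}` are mutually independent random finite subsets of `ι`, with
`S_j ~ μ_j` locally decaying with rate `τ j ≥ 0`, then for every finite `B ⊆ ι` the
probability (under the product distribution) that `B ⊆ S_0 ∪ ⋯ ∪ S_{k-1}` is at
most `(∑ j, τ j) ^ |B|`. -/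
theorem locallyDecaying_iUnion {ι : Type*} [DecidableEq ι] (k : ℕ)
    (τ : Fin k → ℝ) (hτ : ∀ j, 0 ≤ τ j)
    (μ : Fin k → PMF (Finset ι)) (h : ∀ j, LocallyDecaying (μ j) (τ j)) :
    ∀ B : Finset ι,
      (∑' S : Fin k → Finset ι,
          if B ⊆ Finset.univ.biUnion (fun j => S j) then ∏ j, μ j (S j) else 0)
        ≤ ENNReal.ofReal ((∑ j, τ j) ^ B.card) := by
  intro B
  classical
  set Bf : ({x // x ∈ B} → Fin k) → Fin k → Finset ι :=
    fun σ j => (B.attach.filter (fun b => σ b = j)).image Subtype.val with hBf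
  have key : ∀ (S : Fin k → Finset ι),
      (if B ⊆ Finset.univ.biUnion (fun j => S j) then ∏ j, μ j (S j) else 0)
        ≤ ∑ σ : {x // x ∈ B} → Fin k,
            ∏ j, (if Bf σ j ⊆ S j then μ j (S j) else 0) := by
    intro S
    split_ifs with hB
    · have hex : ∀ b : {x // x ∈ B}, ∃ j, (b : ι) ∈ S j := by
        intro b
        have := hB b.2
        simpa [Finset.mem_biUnion] using this
      choose σ hσ using hex
      have hsub : ∀ j, Bf σ j ⊆ S j := by
        intro j x hx
        simp only [hBf, Finset.mem_image, Finset.mem_filter] at hx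
        obtain ⟨b, ⟨-, hbj⟩, rfl⟩ := hx
        exact hbj ▸ hσ b
      calc ∏ j, μ j (S j) = ∏ j, (if Bf σ j ⊆ S j then μ j (S j) else 0) := by
            refine Finset.prod_congr rfl fun j _ => ?_
            rw [if_pos (hsub j)]
        _ ≤ ∑ σ' : {x // x ∈ B} → Fin k,
              ∏ j, (if Bf σ' j ⊆ S j then μ j (S j) else 0) :=
            Finset.single_le_sum
              (f := fun σ' => ∏ j, (if Bf σ' j ⊆ S j then μ j (S j) else 0))
              (fun _ _ => zero_le) (Finset.mem_univ σ)
    · exact zero_le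
  calc (∑' S : Fin k → Finset ι,
          if B ⊆ Finset.univ.biUnion (fun j => S j) then ∏ j, μ j (S j) else 0)
      ≤ ∑' S : Fin k → Finset ι, ∑ σ : {x // x ∈ B} → Fin k,
          ∏ j, (if Bf σ j ⊆ S j then μ j (S j) else 0) := ENNReal.tsum_le_tsum key
    _ = ∑ σ : {x // x ∈ B} → Fin k, ∑' S : Fin k → Finset ι,
          ∏ j, (if Bf σ j ⊆ S j then μ j (S j) else 0) :=
        Summable.tsum_finsetSum (fun _ _ => ENNReal.summable)
    _ = ∑ σ : {x // x ∈ B} → Fin k,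
          ∏ j, ∑' s : Finset ι, (if Bf σ j ⊆ s then μ j s else 0) :=
        Finset.sum_congr rfl fun σ _ =>
          tsum_pi_fin_aux k (fun j s => if Bf σ j ⊆ s then μ j s else 0)
    _ ≤ ∑ σ : {x // x ∈ B} → Fin k,
          ∏ j, ENNReal.ofReal (τ j ^ (Bf σ j).card) :=
        Finset.sum_le_sum fun σ _ =>
          Finset.prod_le_prod' fun j _ => h j (Bf σ j)
    _ = ∑ σ : {x // x ∈ B} → Fin k,
          ENNReal.ofReal (∏ j, τ j ^ (Bf σ j).card) :=
        Finset.sum_congr rfl fun σ _ =>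
          (ENNReal.ofReal_prod_of_nonneg (fun j _ => pow_nonneg (hτ j) _)).symm
    _ = ENNReal.ofReal (∑ σ : {x // x ∈ B} → Fin k, ∏ j, τ j ^ (Bf σ j).card) :=
        (ENNReal.ofReal_sum_of_nonneg (fun σ _ =>
          Finset.prod_nonneg fun j _ => pow_nonneg (hτ j) _)).symm
    _ = ENNReal.ofReal ((∑ j, τ j) ^ B.card) := by
        congr 1
        have hcard : ∀ (σ : {x // x ∈ B} → Fin k) (j : Fin k),
            (Bf σ j).card = (B.attach.filter (fun b => σ b = j)).card := by
          intro σ j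
          exact Finset.card_image_of_injective _ Subtype.val_injective
        simp_rw [hcard]
        exact sum_prod_pow_aux k τ B
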